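/- For n ≥ 3 define the n-qubit linear cluster state Lin_n : (Fin n → Fin 2) → ℂ by Lin_n(x) = 2^{-n/2}·(-1)^{∑_{i=0}^{n-2} x_i x_{i+1}}, and similarly Lin_{n-1} on n-1 qubits. Fix m ∈ {0,1}, let H := (1/√2)·!![1,1;1,-1], Z := !![1,0;0,-1], and P_z := (√2/2)·(1 - i·Z). Define w : (Fin (n-1) → Fin 2) → ℂ by contracting the second qubit of Lin_n with the σ_y eigenvector ⟨y_m| = (⟨0| + (-1)^m·(-i)·⟨1|)/√2: w(a, y) := ∑_{b ∈ Fin 2} (1/√2)·((-1)^m·(-i))^b · Lin_n(a, b, y). Then there exists c ∈ ℂ with |c| = 1/√2 such that for all (a', y), ∑_{a ∈ Fin 2} (P_z^{2m+1}·H)_{a',a} · w(a, y) = c · Lin_{n-1}(a', y). -/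

import Mathlib

/-- The `n`-qubit linear cluster state amplitudes:
`Lin_n(x) = 2^{-n/2} · (-1)^{∑_{i=0}^{n-2} xᵢ·xᵢ₊₁}`, with `2^{-n/2} = (√2)⁻ⁿ`. -/
noncomputable def Lin (n : ℕ) (x : Fin n → Fin 2) : ℂ :=
  (((Real.sqrt 2)⁻¹ ^ n : ℝ) : ℂ) *
    (-1 : ℂ) ^ (∑ i : Fin (n - 1),
      ((x ⟨i.1, by have := i.isLt; omega⟩ : Fin 2) : ℕ) *
      ((x ⟨i.1 + 1, by have := i.isLt; omega⟩ : Fin 2) : ℕ))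

/-- The Hadamard gate `H = (1/√2)·!![1,1;1,-1]`. -/
noncomputable def Hgate : Matrix (Fin 2) (Fin 2) ℂ :=
  ((1 / Real.sqrt 2 : ℝ) : ℂ) • !![1, 1; 1, -1]

/-- The Pauli `Z` gate. -/
def Zgate : Matrix (Fin 2) (Fin 2) ℂ := !![1, 0; 0, -1]

/-- The half rotation around the Z-axis, `P_z = (√2/2)·(1 - i·Z)`. -/
noncomputable def Pz : Matrix (Fin 2) (Fin 2) ℂ :=
  ((Real.sqrt 2 / 2 : ℝ) : ℂ) • ((1 : Matrix (Fin 2) (Fin 2) ℂ) - Complex.I • Zgate)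

/-- Insert a bit `b` as the second qubit of an `(n+2)`-qubit basis string,
producing an `(n+3)`-qubit basis string `(z₀, b, z₁, …, z_{n+1})`. -/
def insSnd (n : ℕ) (b : Fin 2) (z : Fin (n + 2) → Fin 2) : Fin (n + 3) → Fin 2 :=
  fun i =>
    if i.1 = 0 then z ⟨0, by omega⟩
    else if i.1 = 1 then b
    else z ⟨i.1 - 1, by have := i.isLt; omega⟩

/-- The (subnormalized) post-measurement state obtained by contracting the second
qubit of `Lin_{n+3}` with the `σ_y` eigenvector `⟨y_m| = (⟨0| + (-1)^m·(-i)·⟨1|)/√2`: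
`w(a,y) = ∑_b (1/√2)·((-1)^m·(-i))^b·Lin_{n+3}(a, b, y)`. -/
noncomputable def wY (n m : ℕ) (z : Fin (n + 2) → Fin 2) : ℂ :=
  ∑ b : Fin 2,
    (((Real.sqrt 2)⁻¹ : ℝ) : ℂ) * ((-1 : ℂ) ^ m * (-Complex.I)) ^ (b : ℕ) *
      Lin (n + 3) (insSnd n b z)

lemma lin_ins (n : ℕ) (a b : Fin 2) (x' : Fin (n+2) → Fin 2) :
    Lin (n+3) (insSnd n b (Function.update x' 0 a)) =
    (((Real.sqrt 2)⁻¹ ^ (n+3) : ℝ) : ℂ) *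
      ((-1:ℂ)^((a:ℕ)*(b:ℕ)) * (-1:ℂ)^((b:ℕ)*((x' 1 : Fin 2):ℕ)) *
       (-1:ℂ)^(∑ j : Fin n, ((x' ⟨j.1+1, by omega⟩ : Fin 2):ℕ) * ((x' ⟨j.1+2, by omega⟩ : Fin 2):ℕ))) := by
  rw [Lin, ← pow_add, ← pow_add]
  congr 2
  show (∑ i : Fin (n+2), ((insSnd n b (Function.update x' 0 a) ⟨i.1, by omega⟩ : Fin 2):ℕ) *
      ((insSnd n b (Function.update x' 0 a) ⟨i.1+1, by omega⟩ : Fin 2):ℕ)) = _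
  rw [Fin.sum_univ_succ, Fin.sum_univ_succ]
  simp only [insSnd, Function.update, Fin.succ]
  simp [Fin.ext_iff, add_assoc]

lemma lin_two (n : ℕ) (x' : Fin (n+2) → Fin 2) :
    Lin (n+2) x' =
    (((Real.sqrt 2)⁻¹ ^ (n+2) : ℝ) : ℂ) *
      ((-1:ℂ)^(((x' 0 : Fin 2):ℕ)*((x' 1 : Fin 2):ℕ)) *
       (-1:ℂ)^(∑ j : Fin n, ((x' ⟨j.1+1, by omega⟩ : Fin 2):ℕ) * ((x' ⟨j.1+2, by omega⟩ : Fin 2):ℕ))) := by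
  rw [Lin, ← pow_add]
  congr 2
  show (∑ i : Fin (n+1), ((x' ⟨i.1, by omega⟩ : Fin 2):ℕ) * ((x' ⟨i.1+1, by omega⟩ : Fin 2):ℕ)) = _
  rw [Fin.sum_univ_succ]
  simp [Fin.succ, Fin.ext_iff, add_assoc]


lemma lin_ins' (n : ℕ) (a b : Fin 2) (x' : Fin (n+2) → Fin 2) :
    Lin (n+3) (insSnd n b (Function.update x' 0 a)) =
    (((Real.sqrt 2)⁻¹ ^ n : ℝ) : ℂ) * (((Real.sqrt 2)⁻¹ : ℝ) : ℂ)^3 *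
      ((-1:ℂ)^((a:ℕ)*(b:ℕ)) * (-1:ℂ)^((b:ℕ)*((x' 1 : Fin 2):ℕ)) *
       (-1:ℂ)^(∑ j : Fin n, ((x' ⟨j.1+1, by omega⟩ : Fin 2):ℕ) * ((x' ⟨j.1+2, by omega⟩ : Fin 2):ℕ))) := by
  rw [lin_ins]; push_cast [pow_succ]; ring

lemma lin_two' (n : ℕ) (x' : Fin (n+2) → Fin 2) :
    Lin (n+2) x' =
    (((Real.sqrt 2)⁻¹ ^ n : ℝ) : ℂ) * (((Real.sqrt 2)⁻¹ : ℝ) : ℂ)^2 *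
      ((-1:ℂ)^(((x' 0 : Fin 2):ℕ)*((x' 1 : Fin 2):ℕ)) *
       (-1:ℂ)^(∑ j : Fin n, ((x' ⟨j.1+1, by omega⟩ : Fin 2):ℕ) * ((x' ⟨j.1+2, by omega⟩ : Fin 2):ℕ))) := by
  rw [lin_two]; push_cast [pow_succ]; ring

set_option maxHeartbeats 1600000 in
/-- for `n + 3 ≥ 3` qubits: measuring the second qubit of a linear
cluster chain in the `σ_y` basis with outcome `m ∈ {0,1}` and applying the local
correction `P_z^{2m+1}·H` to the first qubit yields, up to a global phase `c` of
modulus `1/√2`, the shorter linear cluster state: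
`∑_a (P_z^{2m+1}·H)_{a',a} · w(a, y) = c·Lin_{n+2}(a', y)` for all `(a', y)`. -/
theorem stmt_14 (n m : ℕ) (hm : m = 0 ∨ m = 1) :
    ∃ c : ℂ, ‖c‖ = (Real.sqrt 2)⁻¹ ∧
      ∀ x' : Fin (n + 2) → Fin 2,
        ∑ a : Fin 2, (Pz ^ (2 * m + 1) * Hgate) (x' 0) a * wY n m (Function.update x' 0 a)
          = c * Lin (n + 2) x' := by
  rcases hm with rfl | rfl
  · refine ⟨(1 - Complex.I)/2, ?_, fun x' => ?_⟩
    · have h2 : Real.sqrt 2 * Real.sqrt 2 = 2 := Real.mul_self_sqrt (by norm_num)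
      have habs : ‖(1 - Complex.I : ℂ)‖ = Real.sqrt 2 := by
        rw [Complex.norm_def, Complex.normSq_apply]
        simp
        norm_num
      rw [show ((1:ℂ) - Complex.I)/2 = (1 - Complex.I) / 2 by ring, norm_div, habs]
      simp
      rw [eq_comm, inv_eq_one_div, div_eq_div_iff (by positivity) (by norm_num)]
      linarith [h2]
    · have h0 : x' 0 = 0 ∨ x' 0 = 1 := by omega
      have h1 : x' 1 = 0 ∨ x' 1 = 1 := by omega
      rcases h0 with h0 | h0 <;> rcases h1 with h1 | h1 <;>
        simp only [wY, lin_ins'] <;>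
        rw [lin_two' n x'] <;>
        simp only [Fin.sum_univ_two, h0, h1, Fin.val_zero, Fin.val_one] <;>
        simp [Pz, Hgate, Zgate, Matrix.mul_apply, Fin.sum_univ_two, pow_succ]
      all_goals {
        generalize ((-1:ℂ) ^ (∑ j : Fin n, ((x' ⟨j.1+1, by omega⟩ : Fin 2):ℕ) * ((x' ⟨j.1+2, by omega⟩ : Fin 2):ℕ))) = u
        have hs0 : ((Real.sqrt 2:ℝ):ℂ) ≠ 0 := by norm_cast; positivity
        have hs : ((Real.sqrt 2:ℝ):ℂ) * ((Real.sqrt 2:ℝ):ℂ) = 2 := by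
          norm_cast; exact Real.mul_self_sqrt (by norm_num)
        have E2 : ((Real.sqrt 2:ℝ):ℂ)⁻¹ ^ 2 = 1/2 := by
          rw [inv_pow, sq, hs]; norm_num
        have E5 : ((Real.sqrt 2:ℝ):ℂ)⁻¹ ^ 5 = (1/4) * ((Real.sqrt 2:ℝ):ℂ)⁻¹ := by
          rw [show ((Real.sqrt 2:ℝ):ℂ)⁻¹^5 = (((Real.sqrt 2:ℝ):ℂ)⁻¹^2)^2 * ((Real.sqrt 2:ℝ):ℂ)⁻¹ by ring, E2]
          ring
        ring_nf
        generalize ((↑(Real.sqrt 2):ℂ))⁻¹ ^ n = v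
        simp only [E2, E5, Complex.I_sq]
        field_simp
        ring }

  · refine ⟨(-1 - Complex.I)/2, ?_, fun x' => ?_⟩
    · have h2 : Real.sqrt 2 * Real.sqrt 2 = 2 := Real.mul_self_sqrt (by norm_num)
      have habs : ‖(-1 - Complex.I : ℂ)‖ = Real.sqrt 2 := by
        rw [Complex.norm_def, Complex.normSq_apply]
        simp
        norm_num
      rw [norm_div, habs]
      simp
      rw [eq_comm, inv_eq_one_div, div_eq_div_iff (by positivity) (by norm_num)]
      linarith [h2]
    · have h0 : x' 0 = 0 ∨ x' 0 = 1 := by omega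
      have h1 : x' 1 = 0 ∨ x' 1 = 1 := by omega
      rcases h0 with h0 | h0 <;> rcases h1 with h1 | h1 <;>
        simp only [wY, lin_ins'] <;>
        rw [lin_two' n x'] <;>
        simp only [Fin.sum_univ_two, h0, h1, Fin.val_zero, Fin.val_one] <;>
        simp [Pz, Hgate, Zgate, Matrix.mul_apply, Fin.sum_univ_two, pow_succ]
      all_goals {
        generalize ((-1:ℂ) ^ (∑ j : Fin n, ((x' ⟨j.1+1, by omega⟩ : Fin 2):ℕ) * ((x' ⟨j.1+2, by omega⟩ : Fin 2):ℕ))) = u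
        have hs0 : ((Real.sqrt 2:ℝ):ℂ) ≠ 0 := by norm_cast; positivity
        have hs : ((Real.sqrt 2:ℝ):ℂ) * ((Real.sqrt 2:ℝ):ℂ) = 2 := by
          norm_cast; exact Real.mul_self_sqrt (by norm_num)
        have E2 : ((Real.sqrt 2:ℝ):ℂ)⁻¹ ^ 2 = 1/2 := by
          rw [inv_pow, sq, hs]; norm_num
        have E5 : ((Real.sqrt 2:ℝ):ℂ)⁻¹ ^ 5 = (1/4) * ((Real.sqrt 2:ℝ):ℂ)⁻¹ := by
          rw [show ((Real.sqrt 2:ℝ):ℂ)⁻¹^5 = (((Real.sqrt 2:ℝ):ℂ)⁻¹^2)^2 * ((Real.sqrt 2:ℝ):ℂ)⁻¹ by ring, E2]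
          ring
        have E3 : ((Real.sqrt 2:ℝ):ℂ) ^ 3 = 2 * ((Real.sqrt 2:ℝ):ℂ) := by
          rw [show ((Real.sqrt 2:ℝ):ℂ)^3 = (((Real.sqrt 2:ℝ):ℂ) * ((Real.sqrt 2:ℝ):ℂ)) * ((Real.sqrt 2:ℝ):ℂ) by ring, hs]
        have I2 : Complex.I ^ 2 = -1 := Complex.I_sq
        have I3 : Complex.I ^ 3 = -Complex.I := by
          rw [show Complex.I^3 = Complex.I^2 * Complex.I by ring, I2]; ring
        have I4 : Complex.I ^ 4 = 1 := by
          rw [show Complex.I^4 = Complex.I^2 * Complex.I^2 by ring, I2]; ring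
        have Esq : ((Real.sqrt 2:ℝ):ℂ) ^ 2 = 2 := by rw [sq, hs]
        have Einv : ((Real.sqrt 2:ℝ):ℂ)⁻¹ = ((Real.sqrt 2:ℝ):ℂ) / 2 := by
          field_simp
          linear_combination -hs
        ring_nf
        generalize ((↑(Real.sqrt 2):ℂ))⁻¹ ^ n = v
        simp only [E2, E3, E5, I2, I3, I4]
        simp only [Einv]
        ring_nf
        simp only [Esq]
        ring_nf
        try ring
        try norm_num }
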